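/- Let a ≥ 1, let G_a be the 2^a × 2^a matrix over the polynomial entries in complex variables x_0,…,x_a defined recursively by G_1 = [[x_0, −x_1*],[x_1, x_0*]] and G_a = [[G_{a−1}, −x_a* I],[x_a I, G_{a−1}^H]] (I the identity of size 2^{a−1}, H conjugate transpose). Then for all row and column indices i, j < 2^a, the entry G_a(i,j) is nonzero if and only if i ⊕ j ∈ {0, 1, 2, 4, …, 2^{a−1}} (bitwise XOR), and when nonzero, the variable appearing in G_a(i,j) is x_l where i ⊕ j = 2^{l−1} (with the convention that i ⊕ j = 0 corresponds to x_0). -/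

import Mathlib

/-- The recursively-defined square complex orthogonal design of Tirkkonen–Hottinen,
evaluated at an assignment `x : ℕ → ℂ` of values to the complex variables.
`G x a i j` is the `(i,j)` entry of the `2^a × 2^a` design `G_a` (indices `i j < 2^a`):
`G_0 = [x 0]` and
`G_{a+1} = [[G_a, -x_{a+1}* I], [x_{a+1} I, G_a^H]]`. -/
def G (x : ℕ → ℂ) : ℕ → ℕ → ℕ → ℂ
  | 0, _, _ => x 0
  | a + 1, i, j =>
    if i < 2 ^ a then
      if j < 2 ^ a then G x a i j
      else if j = i + 2 ^ a then -(starRingEnd ℂ (x (a + 1))) else 0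
    else
      if j < 2 ^ a then (if i = j + 2 ^ a then x (a + 1) else 0)
      else starRingEnd ℂ (G x a (j - 2 ^ a) (i - 2 ^ a))

/-- Support characterization: the formal entry `G_a(i,j)` is nonzero (i.e. nonzero for
some assignment of complex values to the variables) iff `i ⊕ j ∈ {0} ∪ {2^l : l < a}`. -/
lemma pow_xor_eq_add {a r : ℕ} (hr : r < 2 ^ a) : 2 ^ a ^^^ r = 2 ^ a + r := by
  apply Nat.eq_of_testBit_eq
  intro k
  rcases lt_trichotomy k a with hk | rfl | hk
  · rw [Nat.testBit_xor, Nat.testBit_two_pow_of_ne (by omega),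
      Nat.testBit_two_pow_add_gt hk]
    simp
  · rw [Nat.testBit_xor, Nat.testBit_two_pow_self, Nat.testBit_two_pow_add_eq,
      Nat.testBit_lt_two_pow hr]
    simp
  · have h1 : r < 2 ^ k := lt_of_lt_of_le hr (Nat.pow_le_pow_right (by norm_num) hk.le)
    have h2 : 2 ^ a + r < 2 ^ k := by
      calc 2 ^ a + r < 2 ^ a + 2 ^ a := by omega
        _ = 2 ^ (a + 1) := by ring
        _ ≤ 2 ^ k := Nat.pow_le_pow_right (by norm_num) hk
    rw [Nat.testBit_xor, Nat.testBit_two_pow_of_ne (by omega),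
      Nat.testBit_lt_two_pow h1, Nat.testBit_lt_two_pow h2]
    rfl

/-- XOR across the block boundary. -/
lemma xor_hi {a i r : ℕ} (hi : i < 2 ^ a) (hr : r < 2 ^ a) :
    i ^^^ (2 ^ a + r) = 2 ^ a + (i ^^^ r) := by
  rw [← pow_xor_eq_add hr, ← Nat.xor_assoc, Nat.xor_comm i (2 ^ a), Nat.xor_assoc,
    pow_xor_eq_add (Nat.xor_lt_two_pow hi hr)]

/-- In the off-diagonal quadrant, the support condition is equivalent to `j = i + 2^a`. -/
lemma cond_hi {a i j : ℕ} (hi : i < 2 ^ a) (hj1 : 2 ^ a ≤ j) (hj2 : j < 2 ^ (a + 1)) :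
    ((i ^^^ j = 0 ∨ ∃ l < a + 1, i ^^^ j = 2 ^ l) ↔ j = i + 2 ^ a) := by
  have hr : j - 2 ^ a < 2 ^ a := by
    have : 2 ^ (a + 1) = 2 ^ a + 2 ^ a := by ring
    omega
  have hx : i ^^^ j = 2 ^ a + (i ^^^ (j - 2 ^ a)) := by
    conv_lhs => rw [show j = 2 ^ a + (j - 2 ^ a) by omega]
    exact xor_hi hi hr
  constructor
  · rintro (h | ⟨l, hl, h⟩)
    · omega
    · have hle : 2 ^ l ≤ 2 ^ a := Nat.pow_le_pow_right (by norm_num) (by omega)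
      have : i ^^^ (j - 2 ^ a) = 0 := by omega
      have := xor_eq_zero_iff.mp this
      omega
  · intro h
    right
    exact ⟨a, by omega, by rw [hx, h]; simp [Nat.add_comm, Nat.add_sub_cancel]⟩

lemma G_zero : ∀ a (x : ℕ → ℂ) i j, i < 2 ^ a → j < 2 ^ a →
    ¬(i ^^^ j = 0 ∨ ∃ l < a, i ^^^ j = 2 ^ l) → G x a i j = 0 := by
  intro a
  induction a with
  | zero =>
    intro x i j hi hj h
    interval_cases i <;> interval_cases j <;> simp at h
  | succ a ih =>
    intro x i j hi hj h
    have hpow : 2 ^ (a + 1) = 2 ^ a + 2 ^ a := by ring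
    rw [G]
    by_cases h1 : i < 2 ^ a <;> by_cases h2 : j < 2 ^ a
    · simp only [if_pos h1, if_pos h2]
      apply ih x i j h1 h2
      intro hc
      exact h (by rcases hc with hc | ⟨l, hl, hc⟩; · left; exact hc
                  · right; exact ⟨l, by omega, hc⟩)
    · simp only [if_pos h1, if_neg h2]
      rw [if_neg]
      intro hji
      exact h ((cond_hi h1 (by omega) hj).mpr hji)
    · simp only [if_neg h1, if_pos h2]
      rw [if_neg]
      intro hij
      apply h
      rw [Nat.xor_comm]
      exact (cond_hi h2 (by omega) hi).mpr hij
    · simp only [if_neg h1, if_neg h2]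
      rw [ih x (j - 2 ^ a) (i - 2 ^ a) (by omega) (by omega), map_zero]
      intro hc
      apply h
      have e : (j - 2 ^ a) ^^^ (i - 2 ^ a) = i ^^^ j := by
        have ei : i = 2 ^ a + (i - 2 ^ a) := by omega
        have ej : j = 2 ^ a + (j - 2 ^ a) := by omega
        conv_rhs => rw [ei, ej]
        rw [← pow_xor_eq_add (show i - 2 ^ a < 2 ^ a by omega),
          ← pow_xor_eq_add (show j - 2 ^ a < 2 ^ a by omega)]
        rw [Nat.xor_comm (2 ^ a) (i - 2 ^ a), Nat.xor_assoc, ← Nat.xor_assoc (2 ^ a),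
          Nat.xor_self, Nat.zero_xor, Nat.xor_comm]
      rw [e] at hc
      rcases hc with hc | ⟨l, hl, hc⟩
      · left; exact hc
      · right; exact ⟨l, by omega, hc⟩

lemma G_pos : ∀ a i j, i < 2 ^ a → j < 2 ^ a →
    (i ^^^ j = 0 ∨ ∃ l < a, i ^^^ j = 2 ^ l) → G (fun _ => 1) a i j ≠ 0 := by
  intro a
  induction a with
  | zero =>
    intro i j hi hj _
    rw [G]; norm_num
  | succ a ih =>
    intro i j hi hj h
    have hpow : 2 ^ (a + 1) = 2 ^ a + 2 ^ a := by ring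
    rw [G]
    by_cases h1 : i < 2 ^ a <;> by_cases h2 : j < 2 ^ a
    · simp only [if_pos h1, if_pos h2]
      apply ih i j h1 h2
      rcases h with hc | ⟨l, hl, hc⟩
      · left; exact hc
      · right
        refine ⟨l, ?_, hc⟩
        have hlt : i ^^^ j < 2 ^ a := Nat.xor_lt_two_pow h1 h2
        rw [hc] at hlt
        exact (Nat.pow_lt_pow_iff_right (by norm_num)).mp hlt
    · simp only [if_pos h1, if_neg h2]
      rw [if_pos ((cond_hi h1 (by omega) hj).mp h)]
      simp
    · simp only [if_neg h1, if_pos h2]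
      rw [if_pos]
      · simp
      · exact (cond_hi h2 (by omega) hi).mp (by rw [Nat.xor_comm] at h; exact h)
    · simp only [if_neg h1, if_neg h2]
      simp only [ne_eq, map_eq_zero]
      apply ih (j - 2 ^ a) (i - 2 ^ a) (by omega) (by omega)
      have e : (j - 2 ^ a) ^^^ (i - 2 ^ a) = i ^^^ j := by
        have ei : i = 2 ^ a + (i - 2 ^ a) := by omega
        have ej : j = 2 ^ a + (j - 2 ^ a) := by omega
        conv_rhs => rw [ei, ej]
        rw [← pow_xor_eq_add (show i - 2 ^ a < 2 ^ a by omega),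
          ← pow_xor_eq_add (show j - 2 ^ a < 2 ^ a by omega)]
        rw [Nat.xor_comm (2 ^ a) (i - 2 ^ a), Nat.xor_assoc, ← Nat.xor_assoc (2 ^ a),
          Nat.xor_self, Nat.zero_xor, Nat.xor_comm]
      rw [e]
      rcases h with hc | ⟨l, hl, hc⟩
      · left; exact hc
      · right
        refine ⟨l, ?_, hc⟩
        have hlt : (j - 2 ^ a) ^^^ (i - 2 ^ a) < 2 ^ a :=
          Nat.xor_lt_two_pow (by omega) (by omega)
        rw [e, hc] at hlt
        exact (Nat.pow_lt_pow_iff_right (by norm_num)).mp hlt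

theorem stmt18 (a : ℕ) (ha : 1 ≤ a) (i j : ℕ) (hi : i < 2 ^ a) (hj : j < 2 ^ a) :
    (∃ x : ℕ → ℂ, G x a i j ≠ 0) ↔ (i ^^^ j = 0 ∨ ∃ l < a, i ^^^ j = 2 ^ l) := by
  constructor
  · rintro ⟨x, hx⟩
    by_contra h
    exact hx (G_zero a x i j hi hj h)
  · intro h
    exact ⟨fun _ => 1, G_pos a i j hi hj h⟩
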